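/- For each ε > 0, the set U_ε of orientation-preserving homeomorphisms of [0,1] satisfying property P_ε is dense in H⁺([0,1]): any increasing homeomorphism of [0,1] can be C⁰-approximated by one satisfying P_ε, obtained by exploding finitely many fixed points into small wandering intervals. -/

import Mathlib

open Set Filter Topology

noncomputable section

/-- The space `H⁺([0,1])` of increasing (orientation-preserving) homeomorphisms of `[0,1]`,
identified with the order isomorphisms of the unit interval. -/
abbrev HI := unitInterval ≃o unitInterval

/-- `(a,b)` is an r-interval of `f`: a connected component of `[0,1] \ Fix f`
on which all forward orbits converge to the right endpoint `b`. -/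
def IsRInt (f : HI) (a b : unitInterval) : Prop :=
  a < b ∧ f a = a ∧ f b = b ∧ (∀ x ∈ Set.Ioo a b, f x ≠ x) ∧
    ∀ x ∈ Set.Ioo a b, Tendsto (fun n => (⇑f)^[n] x) atTop (nhds b)

/-- `(a,b)` is an l-interval of `f`: a connected component of `[0,1] \ Fix f`
on which all forward orbits converge to the left endpoint `a`. -/
def IsLInt (f : HI) (a b : unitInterval) : Prop :=
  a < b ∧ f a = a ∧ f b = b ∧ (∀ x ∈ Set.Ioo a b, f x ≠ x) ∧
    ∀ x ∈ Set.Ioo a b, Tendsto (fun n => (⇑f)^[n] x) atTop (nhds a)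

/-- Property `P_ε`: there are wandering intervals `(a i, b i)`, `i = 0,…,n`, ordered in `(0,1)`,
alternately r-intervals (even index) and l-intervals (odd index), with all gaps smaller
than `ε`. -/
def PProp (f : HI) (ε : ℝ) : Prop :=
  ∃ (n : ℕ) (a b : Fin (n + 1) → unitInterval),
    0 < a 0 ∧
    (∀ i, a i < b i) ∧
    (∀ i : Fin n, b i.castSucc < a i.succ) ∧
    b (Fin.last n) < 1 ∧
    (∀ i : Fin (n + 1), Even (i : ℕ) → IsRInt f (a i) (b i)) ∧
    (∀ i : Fin (n + 1), ¬ Even (i : ℕ) → IsLInt f (a i) (b i)) ∧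
    (a 0 : ℝ) < ε ∧ 1 - (b (Fin.last n) : ℝ) < ε ∧
    ∀ i : Fin n, (a i.succ : ℝ) - (b i.castSucc : ℝ) < ε

/-- The `C⁰` distance on `H⁺([0,1])`. -/
def dC0 (f g : HI) : ℝ :=
  ⨆ x : unitInterval, max (dist (f x) (g x)) (dist (f.symm x) (g.symm x))

lemma abs_min_sub_min_le_abs' (a b c : ℝ) : |min a c - min b c| ≤ |a - b| := by
  have hh := le_abs_self (a - b)
  have hh' := neg_abs_le (a - b)
  rcases le_total a c with h1 | h1 <;> rcases le_total b c with h2 | h2 <;>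
    simp only [min_eq_left, min_eq_right, h1, h2] <;> rw [abs_le] <;>
    constructor <;> linarith


/-- clamp of `x` to `[p,q]` -/
def clampf (p q x : ℝ) : ℝ := max p (min x q)

/-- quadratic bump supported on `[p,q]` -/
def bump (p q x : ℝ) : ℝ := (clampf p q x - p) * (q - clampf p q x)

lemma clampf_mem (p q x : ℝ) (hpq : p ≤ q) : clampf p q x ∈ Icc p q := by
  constructor
  · exact le_max_left _ _
  · exact max_le hpq (min_le_right _ _)

lemma clampf_lip (p q x y : ℝ) : |clampf p q x - clampf p q y| ≤ |x - y| := by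
  have h1 : |max p (min x q) - max p (min y q)| ≤ |min x q - min y q| := by
    rw [max_comm p _, max_comm p _]
    exact abs_max_sub_max_le_abs _ _ _
  have h2 : |min x q - min y q| ≤ |x - y| := abs_min_sub_min_le_abs' x y q
  exact le_trans h1 h2

lemma bump_eq_zero_left (p q x : ℝ) (hx : x ≤ p) : bump p q x = 0 := by
  have : min x q ≤ p := le_trans (min_le_left _ _) hx
  have h : clampf p q x = p := by
    unfold clampf; exact max_eq_left this
  unfold bump; rw [h]; ring

lemma bump_eq_zero_right (p q x : ℝ) (hpq : p ≤ q) (hx : q ≤ x) : bump p q x = 0 := by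
  have h : clampf p q x = q := by
    unfold clampf
    rw [min_eq_right hx]
    exact max_eq_right hpq
  unfold bump; rw [h]; ring

lemma bump_pos (p q x : ℝ) (hx : x ∈ Ioo p q) : 0 < bump p q x := by
  have h : clampf p q x = x := by
    unfold clampf
    rw [min_eq_left hx.2.le]
    exact max_eq_right hx.1.le
  unfold bump; rw [h]
  exact mul_pos (by linarith [hx.1]) (by linarith [hx.2])

lemma bump_lip (p q x y : ℝ) (hpq : p ≤ q) :
    |bump p q x - bump p q y| ≤ (q - p) * |x - y| := by
  set u := clampf p q x with hu
  set v := clampf p q y with hv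
  have hum := clampf_mem p q x hpq
  have hvm := clampf_mem p q y hpq
  have hid : bump p q x - bump p q y = (u - v) * (p + q - u - v) := by
    unfold bump; rw [← hu, ← hv]; ring
  rw [hid, abs_mul]
  have h1 : |u - v| ≤ |x - y| := clampf_lip p q x y
  have h2 : |p + q - u - v| ≤ q - p := by
    rw [abs_le]
    constructor <;> [linarith [hum.2, hvm.2]; linarith [hum.1, hvm.1]]
  calc |u - v| * |p + q - u - v| ≤ |x - y| * (q - p) := by
        apply mul_le_mul h1 h2 (abs_nonneg _) (abs_nonneg _)
    _ = (q - p) * |x - y| := by ring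

lemma bump_continuous (p q : ℝ) : Continuous (bump p q) := by
  unfold bump clampf
  fun_prop

lemma sum_tel (n : ℕ) : ∀ (A B : Fin (n+1) → ℝ), (∀ i, A i ≤ B i) →
    (∀ i : Fin n, B i.castSucc ≤ A i.succ) →
    ∑ i, (B i - A i) ≤ B (Fin.last n) - A 0 := by
  induction n with
  | zero => intro A B h1 h2; simp [Fin.last]
  | succ n ih =>
    intro A B h1 h2
    rw [Fin.sum_univ_castSucc]
    have hih := ih (fun i => A i.castSucc) (fun i => B i.castSucc)
      (fun i => h1 _)
      (fun i => by
        have := h2 i.castSucc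
        rwa [Fin.succ_castSucc] at this)
    have hlast : B (Fin.last n).castSucc ≤ A (Fin.last n).succ := h2 (Fin.last n)
    have : A (Fin.last n).succ = A (Fin.last (n+1)) := by
      congr 1
    have h0 : A (0 : Fin (n+1)).castSucc = A 0 := by
      congr 1
    have hfl : (Fin.last n).succ = Fin.last (n+1) := rfl
    rw [hfl] at hlast
    simp only [Fin.castSucc] at *
    linarith [hih]


variable (D : ℕ → ℝ) (δ : ℝ) (N : ℕ)

def Opp (s : Bool) (k : ℕ) : Prop := if s then D k < -(δ/2) else δ/2 < D k

def CH (a : ℕ) (s : Bool) : Prop :=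
  ∃ (n : ℕ) (P Q : Fin (n+1) → ℕ),
    P 0 = a ∧ Q (Fin.last n) = N - 1 ∧ (∀ i, P i < Q i) ∧
    (∀ i : Fin n, Q i.castSucc + 1 = P i.succ) ∧
    (∀ i, |D (P i)| ≤ δ/2 ∧ |D (Q i)| ≤ δ/2) ∧
    (∀ (i : Fin (n+1)) (k : ℕ), P i < k → k < Q i →
      ¬ Opp D δ (if Even (i:ℕ) then s else !s) k)

lemma D_dist (hosc : ∀ j < N, |D (j+1) - D j| ≤ δ/64) :
    ∀ i j, i ≤ j → j ≤ N → |D j - D i| ≤ ((j - i : ℕ) : ℝ) * (δ/64) := by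
  intro i j hij
  induction j, hij using Nat.le_induction with
  | base => intro _; simp
  | succ j hij ih =>
    intro hjN
    have h1 := hosc j (by omega)
    have h2 := ih (by omega)
    have hcast : ((j + 1 - i : ℕ) : ℝ) = ((j - i : ℕ) : ℝ) + 1 := by
      have : j + 1 - i = (j - i) + 1 := by omega
      rw [this]; push_cast; ring
    rw [hcast]
    calc |D (j+1) - D i| ≤ |D (j+1) - D j| + |D j - D i| := abs_sub_le _ _ _
      _ ≤ δ/64 + ((j - i : ℕ) : ℝ) * (δ/64) := by linarith
      _ = (((j - i : ℕ) : ℝ) + 1) * (δ/64) := by ring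

lemma opp_abs (hδ : 0 < δ) {s : Bool} {k : ℕ} (h : Opp D δ s k) : δ/2 < |D k| := by
  unfold Opp at h
  cases s
  · simp only [Bool.false_eq_true, if_false] at h
    rw [abs_of_pos (by linarith)]; exact h
  · simp only [if_true] at h
    rw [abs_of_neg (by linarith)]; linarith

lemma chain_rec (hδ : 0 < δ) (hN : 100 ≤ N)
    (hosc : ∀ j < N, |D (j+1) - D j| ≤ δ/64) (hDN : D N = 0) :
    ∀ m a s, N - a ≤ m → 1 ≤ a → a + 3 ≤ N → |D a| ≤ δ/2 →
    (∀ k, a < k → k ≤ N → Opp D δ s k → a + 30 ≤ k) → CH D δ N a s := by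
  classical
  have hdist := D_dist D δ N hosc
  intro m
  induction m with
  | zero => intro a s h1 h2 h3 _ _; omega
  | succ m ih =>
    intro a s hm ha1 ha3 hgood hopp
    by_cases hex : ∃ k, a < k ∧ k ≤ N ∧ Opp D δ s k
    · -- there is an opposite-sign node; take the least one
      obtain ⟨hau, huN, huo⟩ := Nat.find_spec hex
      set u := Nat.find hex with hudef
      have humin : ∀ k, a < k → k < u → ¬ Opp D δ s k := by
        intro k hk1 hk2 hko
        exact Nat.find_min hex hk2 ⟨hk1, by omega, hko⟩
      have h30 : a + 30 ≤ u := hopp u hau huN huo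
      have huabs : δ/2 < |D u| := opp_abs D δ hδ huo
      have hNu : u + 33 ≤ N := by
        by_contra hcon
        have h1 := hdist u N huN (le_refl N)
        rw [hDN] at h1
        have h2 : ((N - u : ℕ) : ℝ) ≤ 32 := by
          have : N - u ≤ 32 := by omega
          exact_mod_cast this
        rw [abs_sub_comm] at h1
        simp only [sub_zero] at h1
        nlinarith
      -- goodness of u-3 and u-2
      have hgd : ∀ c, a < c → c + 2 ≤ u → u ≤ c + 3 → |D c| ≤ δ/2 := by
        intro c hc1 hc2 hc3
        have hnopp : ¬ Opp D δ s c := humin c hc1 (by omega)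
        have hd : |D u - D c| ≤ ((u - c : ℕ) : ℝ) * (δ/64) := hdist c u (by omega) huN
        have hcast : ((u - c : ℕ) : ℝ) ≤ 3 := by
          have : u - c ≤ 3 := by omega
          exact_mod_cast this
        have hd3 : |D u - D c| ≤ 3 * (δ/64) := le_trans hd (by nlinarith)
        rw [abs_le] at hd3 ⊢
        unfold Opp at huo hnopp
        cases s
        · simp only [Bool.false_eq_true, if_false] at huo hnopp
          push_neg at hnopp
          constructor <;> linarith
        · simp only [if_true] at huo hnopp
          push_neg at hnopp
          constructor <;> linarith
      have hgb : |D (u-3)| ≤ δ/2 := hgd (u-3) (by omega) (by omega) (by omega)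
      have hga : |D (u-2)| ≤ δ/2 := hgd (u-2) (by omega) (by omega) (by omega)
      -- recursive call at u-2 with sign !s
      have hrec : CH D δ N (u-2) (!s) := by
        apply ih (u-2) (!s) (by omega) (by omega) (by omega) hga
        intro k hk1 hk2 hko
        have hgap : δ < |D k - D u| := by
          unfold Opp at huo hko
          cases s
          · simp only [Bool.false_eq_true, if_false, Bool.not_false, if_true] at huo hko
            rw [abs_of_neg (by linarith)]; linarith
          · simp only [if_true, Bool.not_true, Bool.false_eq_true, if_false] at huo hko
            rw [abs_of_pos (by linarith)]; linarith
        rcases le_total k u with h | h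
        · exfalso
          have hd := hdist k u h huN
          have h2 : ((u - k : ℕ) : ℝ) ≤ 2 := by
            have : u - k ≤ 2 := by omega
            exact_mod_cast this
          rw [abs_sub_comm] at hgap
          nlinarith
        · have hd := hdist u k h hk2
          by_contra hcon
          have h64 : ((k - u : ℕ) : ℝ) ≤ 64 := by
            have : k - u ≤ 64 := by omega
            exact_mod_cast this
          nlinarith
      obtain ⟨n, P, Q, hP0, hQl, hPQ, hcons, hgd2, hsign⟩ := hrec
      refine ⟨n+1, Fin.cons a P, Fin.cons (u-3) Q, ?_, ?_, ?_, ?_, ?_, ?_⟩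
      · simp
      · rw [← Fin.succ_last, Fin.cons_succ]; exact hQl
      · intro i
        refine Fin.cases ?_ ?_ i
        · simp only [Fin.cons_zero]; omega
        · intro j; simp only [Fin.cons_succ]; exact hPQ j
      · intro i
        refine Fin.cases ?_ ?_ i
        · show (Fin.cons (u-3) Q : Fin (n+2) → ℕ) (Fin.castSucc 0) + 1
            = (Fin.cons a P : Fin (n+2) → ℕ) (Fin.succ 0)
          rw [Fin.castSucc_zero, Fin.cons_zero]
          have h1 : (Fin.succ 0 : Fin (n+2)) = (0 : Fin (n+1)).succ := rfl
          rw [h1, Fin.cons_succ, hP0]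
          omega
        · intro j
          show (Fin.cons (u-3) Q : Fin (n+2) → ℕ) (Fin.castSucc j.succ) + 1
            = (Fin.cons a P : Fin (n+2) → ℕ) (Fin.succ j.succ)
          rw [← Fin.succ_castSucc, Fin.cons_succ, Fin.cons_succ]
          exact hcons j
      · intro i
        refine Fin.cases ?_ ?_ i
        · simp only [Fin.cons_zero]; exact ⟨hgood, hgb⟩
        · intro j; simp only [Fin.cons_succ]; exact hgd2 j
      · intro i
        refine Fin.cases ?_ ?_ i
        · intro k hk1 hk2
          simp only [Fin.cons_zero] at hk1 hk2
          have he : (if Even (((0:Fin (n+2))):ℕ) then s else !s) = s := by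
            norm_num
          rw [he]
          exact humin k hk1 (by omega)
        · intro j k hk1 hk2
          simp only [Fin.cons_succ] at hk1 hk2
          have hsign' := hsign j k hk1 hk2
          have heq : (if Even (((j.succ : Fin (n+2))):ℕ) then s else !s)
              = (if Even ((j:ℕ)) then !s else !(!s)) := by
            have hjs : ((j.succ : Fin (n+2)) : ℕ) = (j:ℕ)+1 := rfl
            rw [hjs]
            by_cases hev : Even ((j:ℕ))
            · have h1 : ¬ Even ((j:ℕ)+1) := by simp [Nat.even_add_one, hev]
              simp [hev, h1]
            · have h1 : Even ((j:ℕ)+1) := by simp [Nat.even_add_one, hev]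
              simp [hev, h1]
          rw [heq]
          exact hsign'
    · -- no opposite nodes: single piece [a, N-1]
      refine ⟨0, fun _ => a, fun _ => N - 1, rfl, rfl, ?_, ?_, ?_, ?_⟩
      · intro i; show a < N - 1; omega
      · intro i; exact i.elim0
      · intro i
        constructor
        · exact hgood
        · have h1 := hosc (N-1) (by omega)
          have h2 : N - 1 + 1 = N := by omega
          rw [h2, hDN] at h1
          rw [abs_sub_comm] at h1
          simpa using le_trans h1 (by linarith)
      · intro i k hk1 hk2 hko
        have hk1' : a < k := hk1
        have hk2' : k < N - 1 := hk2
        have : (i : ℕ) = 0 := by omega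
        rw [this] at hko
        rw [show (if Even (0:ℕ) then s else !s) = s by norm_num] at hko
        exact hex ⟨k, hk1', by omega, hko⟩

lemma chain_exists (hδ : 0 < δ) (hN : 100 ≤ N)
    (hosc : ∀ j < N, |D (j+1) - D j| ≤ δ/64) (hD0 : D 0 = 0) (hDN : D N = 0) :
    CH D δ N 1 true := by
  apply chain_rec D δ N hδ hN hosc hDN N 1 true (by omega) (le_refl 1) (by omega)
  · have h1 := hosc 0 (by omega)
    rw [hD0, sub_zero] at h1
    exact le_trans h1 (by linarith)
  · intro k hk1 hkN hko
    have hkabs : δ/2 < |D k| := opp_abs D δ hδ hko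
    have hd := D_dist D δ N hosc 0 k (by omega) hkN
    rw [hD0, sub_zero, Nat.sub_zero] at hd
    by_contra hcon
    have : ((k : ℕ) : ℝ) ≤ 32 := by
      exact_mod_cast (by omega : k ≤ 32)
    nlinarith



lemma exists_HI (G : ℝ → ℝ) (hmono : StrictMonoOn G (Icc 0 1))
    (hcont : ContinuousOn G (Icc 0 1)) (h0 : G 0 = 0) (h1 : G 1 = 1) :
    ∃ g : HI, ∀ x : unitInterval, (g x : ℝ) = G x := by
  have h01 : (0:ℝ) ∈ Icc (0:ℝ) 1 := by norm_num
  have h11 : (1:ℝ) ∈ Icc (0:ℝ) 1 := by norm_num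
  have hmem : ∀ x : unitInterval, G x ∈ Icc (0:ℝ) 1 := by
    intro x
    constructor
    · rw [← h0]; exact hmono.monotoneOn h01 x.2 x.2.1
    · rw [← h1]; exact hmono.monotoneOn x.2 h11 x.2.2
  set Ghat : unitInterval → unitInterval := fun x => ⟨G x, hmem x⟩ with hGhat
  have hsm : StrictMono Ghat := by
    intro x y hxy
    exact hmono x.2 y.2 (by exact_mod_cast hxy)
  have hsurj : Function.Surjective Ghat := by
    intro y
    have := intermediate_value_Icc (zero_le_one) hcont
    rw [h0, h1] at this
    obtain ⟨x, hx, hGx⟩ := this y.2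
    exact ⟨⟨x, hx⟩, Subtype.ext hGx⟩
  exact ⟨hsm.orderIsoOfSurjective Ghat hsurj, fun x => rfl⟩

lemma tendsto_iterate_right (g : HI) (p q : unitInterval) (hq : g q = q)
    (hgt : ∀ x ∈ Set.Ioo p q, x < g x) :
    ∀ x ∈ Set.Ioo p q, Tendsto (fun n => (⇑g)^[n] x) atTop (nhds q) := by
  intro x hx
  set u : ℕ → unitInterval := fun n => (⇑g)^[n] x with hu
  have hstep : ∀ n, u (n+1) = g (u n) := by
    intro n; simp [hu, Function.iterate_succ_apply']
  have hmem : ∀ n, x ≤ u n ∧ u n < q := by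
    intro n
    induction n with
    | zero => exact ⟨le_refl _, hx.2⟩
    | succ n ih =>
      have hio : u n ∈ Set.Ioo p q := ⟨lt_of_lt_of_le hx.1 ih.1, ih.2⟩
      have h1 : u n < g (u n) := hgt _ hio
      have h2 : g (u n) < q := by
        rw [← hq]; exact g.strictMono ih.2
      rw [hstep n]
      exact ⟨le_trans ih.1 h1.le, h2⟩
  have hmono : Monotone u := by
    apply monotone_nat_of_le_succ
    intro n
    rw [hstep n]
    exact (hgt _ ⟨lt_of_lt_of_le hx.1 (hmem n).1, (hmem n).2⟩).le
  -- real-valued sequence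
  set v : ℕ → ℝ := fun n => (u n : ℝ) with hv
  have hvmono : Monotone v := fun a b hab => by exact_mod_cast hmono hab
  have hbdd : BddAbove (Set.range v) := by
    refine ⟨(q:ℝ), ?_⟩
    rintro _ ⟨n, rfl⟩
    exact_mod_cast (hmem n).2.le
  have hvt : Tendsto v atTop (nhds (⨆ n, v n)) := tendsto_atTop_ciSup hvmono hbdd
  set L : ℝ := ⨆ n, v n with hL
  have hxL : (x:ℝ) ≤ L := by
    have := le_ciSup hbdd 0
    simpa [hv, hu] using this
  have hLq : L ≤ (q:ℝ) := ciSup_le (fun n => by exact_mod_cast (hmem n).2.le)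
  have hLmem : L ∈ Icc (0:ℝ) 1 := ⟨le_trans x.2.1 hxL, le_trans hLq q.2.2⟩
  set L' : unitInterval := ⟨L, hLmem⟩ with hL'
  have hut : Tendsto u atTop (nhds L') := by
    rw [tendsto_subtype_rng]; exact hvt
  have hfix : g L' = L' := by
    have h1 : Tendsto (fun n => u (n+1)) atTop (nhds L') :=
      hut.comp (tendsto_add_atTop_nat 1)
    have h2 : Tendsto (fun n => g (u n)) atTop (nhds (g L')) :=
      (g.continuous.tendsto L').comp hut
    have h3 : (fun n => u (n+1)) = fun n => g (u n) := funext hstep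
    rw [h3] at h1
    exact tendsto_nhds_unique h2 h1
  have hLq' : L' = q := by
    rcases lt_or_eq_of_le (show L' ≤ q from hLq) with h | h
    · exfalso
      have : L' ∈ Set.Ioo p q := ⟨lt_of_lt_of_le hx.1 hxL, h⟩
      exact absurd hfix (ne_of_gt (hgt _ this))
    · exact h
  rw [← hLq']
  exact hut


lemma tendsto_iterate_left (g : HI) (p q : unitInterval) (hp : g p = p)
    (hlt : ∀ x ∈ Set.Ioo p q, g x < x) :
    ∀ x ∈ Set.Ioo p q, Tendsto (fun n => (⇑g)^[n] x) atTop (nhds p) := by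
  intro x hx
  set u : ℕ → unitInterval := fun n => (⇑g)^[n] x with hu
  have hstep : ∀ n, u (n+1) = g (u n) := by
    intro n; simp [hu, Function.iterate_succ_apply']
  have hmem : ∀ n, u n ≤ x ∧ p < u n := by
    intro n
    induction n with
    | zero => exact ⟨le_refl _, hx.1⟩
    | succ n ih =>
      have hio : u n ∈ Set.Ioo p q := ⟨ih.2, lt_of_le_of_lt ih.1 hx.2⟩
      have h1 : g (u n) < u n := hlt _ hio
      have h2 : p < g (u n) := by
        rw [← hp]; exact g.strictMono ih.2
      rw [hstep n]
      exact ⟨le_trans h1.le ih.1, h2⟩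
  have hmono : Antitone u := by
    apply antitone_nat_of_succ_le
    intro n
    rw [hstep n]
    exact (hlt _ ⟨(hmem n).2, lt_of_le_of_lt (hmem n).1 hx.2⟩).le
  set v : ℕ → ℝ := fun n => (u n : ℝ) with hv
  have hvmono : Antitone v := fun a b hab => by exact_mod_cast hmono hab
  have hbdd : BddBelow (Set.range v) := by
    refine ⟨(p:ℝ), ?_⟩
    rintro _ ⟨n, rfl⟩
    exact_mod_cast (hmem n).2.le
  have hvt : Tendsto v atTop (nhds (⨅ n, v n)) := tendsto_atTop_ciInf hvmono hbdd
  set L : ℝ := ⨅ n, v n with hL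
  have hxL : L ≤ (x:ℝ) := by
    have := ciInf_le hbdd 0
    simpa [hv, hu] using this
  have hLp : (p:ℝ) ≤ L := le_ciInf (fun n => by exact_mod_cast (hmem n).2.le)
  have hLmem : L ∈ Icc (0:ℝ) 1 := ⟨le_trans p.2.1 hLp, le_trans hxL x.2.2⟩
  set L' : unitInterval := ⟨L, hLmem⟩ with hL'
  have hut : Tendsto u atTop (nhds L') := by
    rw [tendsto_subtype_rng]; exact hvt
  have hfix : g L' = L' := by
    have h1 : Tendsto (fun n => u (n+1)) atTop (nhds L') :=
      hut.comp (tendsto_add_atTop_nat 1)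
    have h2 : Tendsto (fun n => g (u n)) atTop (nhds (g L')) :=
      (g.continuous.tendsto L').comp hut
    have h3 : (fun n => u (n+1)) = fun n => g (u n) := funext hstep
    rw [h3] at h1
    exact tendsto_nhds_unique h2 h1
  have hLp' : L' = p := by
    rcases lt_or_eq_of_le (show p ≤ L' from hLp) with h | h
    · exfalso
      have : L' ∈ Set.Ioo p q := ⟨h, lt_of_le_of_lt hxL hx.2⟩
      exact absurd hfix (ne_of_lt (hlt _ this))
    · exact h.symm
  rw [← hLp']
  exact hut

lemma HI_map_zero (f : HI) : f 0 = 0 := by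
  refine le_antisymm ?_ unitInterval.nonneg'
  have h := f.monotone (unitInterval.nonneg' (t := f.symm 0))
  rwa [OrderIso.apply_symm_apply] at h

lemma HI_map_one (f : HI) : f 1 = 1 := by
  refine le_antisymm unitInterval.le_one' ?_
  have h := f.monotone (unitInterval.le_one' (t := f.symm 1))
  rwa [OrderIso.apply_symm_apply] at h



set_option maxHeartbeats 2000000 in
/-- for each `ε > 0` the set `U_ε` of orientation-preserving homeomorphisms
of `[0,1]` satisfying `P_ε` is dense in `H⁺([0,1])` for the `C⁰` distance. -/
theorem stmt_5 (ε : ℝ) (hε : 0 < ε) (f : HI) (r : ℝ) (hr : 0 < r) :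
    ∃ g : HI, PProp g ε ∧ dC0 f g < r := by
  classical
  -- uniform continuity of f.symm
  have hucs : UniformContinuous (⇑f.symm) :=
    CompactSpace.uniformContinuous_of_continuous f.symm.continuous
  rw [Metric.uniformContinuous_iff] at hucs
  obtain ⟨δ₂, hδ₂, hs⟩ := hucs (r/2) (by linarith)
  set δ := min (r/2) (δ₂/2) with hδdef
  have hδ : 0 < δ := lt_min (by linarith) (by linarith)
  have hδr : δ ≤ r/2 := min_le_left _ _
  have hδ2 : δ < δ₂ := lt_of_le_of_lt (min_le_right _ _) (by linarith)
  -- uniform continuity of f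
  have hucf : UniformContinuous (⇑f) :=
    CompactSpace.uniformContinuous_of_continuous f.continuous
  rw [Metric.uniformContinuous_iff] at hucf
  obtain ⟨θ, hθ, hfm⟩ := hucf (δ/128) (by linarith)
  -- choice of N
  obtain ⟨N, hMN⟩ := exists_nat_gt (max (max 100 (1/θ)) (max (1/ε) (128/δ)))
  have hNpos : (0:ℝ) < N := lt_of_le_of_lt (by positivity) (lt_of_le_of_lt (le_max_left _ _) (lt_of_le_of_lt (le_max_left _ _) hMN))
  have hN100 : 100 ≤ N := by
    have h : (100:ℝ) < N :=
      lt_of_le_of_lt (le_trans (le_max_left _ _) (le_max_left _ _)) hMN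
    exact_mod_cast h.le
  have hinvθ : 1/(N:ℝ) < θ := by
    have h : 1/θ < N := lt_of_le_of_lt (le_trans (le_max_right _ _) (le_max_left _ _)) hMN
    rw [div_lt_iff₀ hθ] at h
    rw [div_lt_iff₀ hNpos]
    nlinarith
  have hinvε : 1/(N:ℝ) < ε := by
    have h : 1/ε < N := lt_of_le_of_lt (le_trans (le_max_left _ _) (le_max_right _ _)) hMN
    rw [div_lt_iff₀ hε] at h
    rw [div_lt_iff₀ hNpos]
    nlinarith
  have hinv128 : 1/(N:ℝ) ≤ δ/128 := by
    have h : 128/δ < N := lt_of_le_of_lt (le_trans (le_max_right _ _) (le_max_right _ _)) hMN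
    rw [div_lt_iff₀ hδ] at h
    rw [div_le_iff₀ hNpos]
    nlinarith
  -- the homeomorphism as a real function and its displacement on the grid
  set F : ℝ → ℝ := fun x => ((f (projIcc 0 1 zero_le_one x)) : ℝ) with hFdef
  have hFval : ∀ x : unitInterval, F (x:ℝ) = (f x : ℝ) := by
    intro x
    simp only [hFdef]
    congr 2
    rw [projIcc_of_mem zero_le_one x.2]
  have hFmem : ∀ x : ℝ, F x ∈ Icc (0:ℝ) 1 := fun x => (f _).2
  have hF0 : F 0 = 0 := by
    have h0 : ((0:unitInterval) : ℝ) = 0 := rfl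
    rw [← h0, hFval 0, HI_map_zero f]
  have hF1 : F 1 = 1 := by
    have h1 : ((1:unitInterval) : ℝ) = 1 := rfl
    rw [← h1, hFval 1, HI_map_one f]
  have hFeq : ∀ (x : ℝ) (hx : x ∈ Icc (0:ℝ) 1), F x = (f ⟨x, hx⟩ : ℝ) := by
    intro x hx
    simp only [hFdef]
    congr 2
    rw [projIcc_of_mem zero_le_one hx]
  have hFosc : ∀ x y : ℝ, x ∈ Icc (0:ℝ) 1 → y ∈ Icc (0:ℝ) 1 → |x - y| < θ →
      |F x - F y| < δ/128 := by
    intro x y hx hy hxy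
    rw [hFeq x hx, hFeq y hy]
    have h1 : dist (⟨x, hx⟩ : unitInterval) ⟨y, hy⟩ < θ := by
      rw [Subtype.dist_eq, Real.dist_eq]; exact hxy
    have h2 := hfm h1
    rwa [Subtype.dist_eq, Real.dist_eq] at h2
  have hFmono : ∀ x y : ℝ, x ∈ Icc (0:ℝ) 1 → y ∈ Icc (0:ℝ) 1 → x < y → F x < F y := by
    intro x y hx hy hxy
    rw [hFeq x hx, hFeq y hy]
    exact_mod_cast f.strictMono (show (⟨x,hx⟩ : unitInterval) < ⟨y,hy⟩ from hxy)
  have hFcont : Continuous F :=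
    continuous_subtype_val.comp (f.continuous.comp continuous_projIcc)
  set D : ℕ → ℝ := fun j => F (j/N) - j/N with hDdef
  have hmemj : ∀ j : ℕ, j ≤ N → ((j:ℝ)/N) ∈ Icc (0:ℝ) 1 := by
    intro j hj
    constructor
    · positivity
    · rw [div_le_one hNpos]; exact_mod_cast hj
  have hD0 : D 0 = 0 := by simp [hDdef, hF0]
  have hDN : D N = 0 := by
    simp only [hDdef, div_self (ne_of_gt hNpos)]
    rw [hF1]; ring
  have hosc : ∀ j, j < N → |D (j+1) - D j| ≤ δ/64 := by
    intro j hj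
    have h1 : ((j+1:ℕ):ℝ)/N - (j:ℝ)/N = 1/N := by push_cast; ring
    have h2 : |((j+1:ℕ):ℝ)/N - (j:ℝ)/N| < θ := by
      rw [h1, abs_of_pos (by positivity)]; exact hinvθ
    have h3 := hFosc _ _ (hmemj (j+1) (by omega)) (hmemj j (by omega)) h2
    have h4 : D (j+1) - D j
        = (F (((j+1:ℕ):ℝ)/N) - F ((j:ℝ)/N)) - (((j+1:ℕ):ℝ)/N - (j:ℝ)/N) := by
      simp only [hDdef]; push_cast; ring
    rw [h4, h1]
    have h5 : |(F (((j+1:ℕ):ℝ)/N) - F ((j:ℝ)/N)) - 1/N|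
        ≤ |F (((j+1:ℕ):ℝ)/N) - F ((j:ℝ)/N)| + |1/(N:ℝ)| := by
      rw [sub_eq_add_neg]
      refine le_trans (abs_add_le _ _) ?_
      rw [abs_neg]
    have h6 : |1/(N:ℝ)| ≤ δ/128 := by
      rw [abs_of_pos (by positivity)]; exact hinv128
    linarith
  obtain ⟨n, P, Q, hP0, hQl, hPQ, hcons, hgood, hsign⟩ :=
    chain_exists D δ N hδ hN100 hosc hD0 hDN
  -- ordering facts about the chain
  have hPm : StrictMono P := by
    rw [Fin.strictMono_iff_lt_succ]
    intro i
    have := hcons i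
    have := hPQ i.castSucc
    omega
  have hQm : StrictMono Q := by
    rw [Fin.strictMono_iff_lt_succ]
    intro i
    have := hcons i
    have := hPQ i.succ
    omega
  have hQltP : ∀ i j : Fin (n+1), i < j → Q i < P j := by
    intro i j
    induction j using Fin.induction with
    | zero => intro h; exact absurd h (Fin.not_lt_zero _)
    | succ j ih =>
      intro h
      have hval : (i:ℕ) ≤ ((j.castSucc : Fin (n+1)):ℕ) := by
        have h2 : (i:ℕ) < ((j.succ : Fin (n+1)):ℕ) := Fin.lt_def.mp h
        rw [Fin.val_succ] at h2
        rw [Fin.coe_castSucc]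
        omega
      rcases lt_or_eq_of_le hval with h' | h'
      · have h1 := ih (Fin.lt_def.mpr h')
        have h2 := hPQ j.castSucc
        have h3 := hcons j
        omega
      · have heq : i = j.castSucc := Fin.ext h'
        rw [heq]
        have := hcons j
        omega
  have hP1 : ∀ i, 1 ≤ P i := by
    intro i
    have := hPm.monotone (Fin.zero_le i)
    omega
  have hQN1 : ∀ i, Q i ≤ N - 1 := by
    intro i
    have := hQm.monotone (Fin.le_last i)
    omega
  have hQN : ∀ i, Q i ≤ N := fun i => le_trans (hQN1 i) (by omega)
  have hPN : ∀ i, P i ≤ N := fun i => le_trans (hPQ i).le (hQN i)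
  -- real nodes
  set A : Fin (n+1) → ℝ := fun i => (P i : ℝ)/N with hAdef
  set B : Fin (n+1) → ℝ := fun i => (Q i : ℝ)/N with hBdef
  have hab : ∀ i, A i < B i := by
    intro i
    have h : (P i : ℝ) < Q i := by exact_mod_cast hPQ i
    simp only [hAdef, hBdef]
    gcongr
  have hBA : ∀ i j, i < j → B i < A j := by
    intro i j hij
    have h : (Q i : ℝ) < P j := by exact_mod_cast hQltP i j hij
    simp only [hAdef, hBdef]
    gcongr
  have hgapBA : ∀ i : Fin n, A i.succ - B i.castSucc = 1/N := by
    intro i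
    have h := hcons i
    simp only [hAdef, hBdef]
    rw [← h]
    push_cast
    ring
  have hAmem : ∀ i, A i ∈ Icc (0:ℝ) 1 := fun i => hmemj (P i) (hPN i)
  have hBmem : ∀ i, B i ∈ Icc (0:ℝ) 1 := fun i => hmemj (Q i) (hQN i)
  have hA0 : A 0 = 1/N := by simp [hAdef, hP0]
  have hBlast : B (Fin.last n) = ((N:ℝ) - 1)/N := by
    simp only [hBdef, hQl]
    congr 1
    have : (1:ℕ) ≤ N := by omega
    push_cast [this]
    ring
  -- displacement bounds inside pieces
  have hDA : ∀ i, |F (A i) - A i| ≤ δ/2 := fun i => (hgood i).1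
  have hDB : ∀ i, |F (B i) - B i| ≤ δ/2 := fun i => (hgood i).2
  have hd_in : ∀ (i : Fin (n+1)) (x : ℝ), A i < x → x < B i →
      ((Even (i:ℕ) → -δ/2 - δ/64 ≤ F x - x) ∧ (¬ Even (i:ℕ) → F x - x ≤ δ/2 + δ/64)) := by
    intro i x hx1 hx2
    have hx0 : 0 ≤ x := le_trans (hAmem i).1 hx1.le
    have hx1' : x ≤ 1 := le_trans hx2.le (hBmem i).2
    set j : ℕ := ⌊x * N⌋₊ with hjdef
    have hjle : (j:ℝ) ≤ x * N := Nat.floor_le (by positivity)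
    have hjlt : x * N < j + 1 := Nat.lt_floor_add_one _
    have hPj : P i ≤ j := by
      apply Nat.le_floor
      have : (P i : ℝ) < x * N := by
        have := hx1
        simp only [hAdef] at this
        rw [div_lt_iff₀ hNpos] at this
        linarith [this]
      exact this.le
    have hjQ : j < Q i := by
      have h1 : (j : ℝ) < Q i := by
        have := hx2
        simp only [hBdef] at this
        rw [lt_div_iff₀ hNpos] at this
        linarith
      exact_mod_cast h1
    have hjN : j < N := lt_of_lt_of_le hjQ (hQN i)
    -- x is within 1/N of j/N
    have hx_near : x - (j:ℝ)/N < 1/N := by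
      rw [sub_lt_iff_lt_add]
      have he : (1:ℝ)/N + (j:ℝ)/N = ((j:ℝ)+1)/N := by ring
      rw [he, lt_div_iff₀ hNpos]
      nlinarith
    have hge : 0 ≤ x - (j:ℝ)/N := by
      rw [sub_nonneg, div_le_iff₀ hNpos]
      linarith
    have hxj : |x - (j:ℝ)/N| < θ := by
      rw [abs_of_nonneg hge]; linarith
    have hxjd : |x - (j:ℝ)/N| ≤ δ/128 := by
      rw [abs_of_nonneg hge]; linarith
    have hFx : |F x - F ((j:ℝ)/N)| < δ/128 := hFosc x _ ⟨hx0, hx1'⟩ (hmemj j hjN.le) hxj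
    have hclosej : |F x - x - D j| ≤ δ/64 := by
      have e : F x - x - D j = (F x - F ((j:ℝ)/N)) - (x - (j:ℝ)/N) := by
        simp only [hDdef]; ring
      rw [e, sub_eq_add_neg]
      refine le_trans (abs_add_le _ _) ?_
      rw [abs_neg]
      linarith
    have hcj := abs_le.mp hclosej
    constructor
    · intro hev
      have hDj : -δ/2 ≤ D j := by
        rcases lt_or_eq_of_le hPj with h' | h'
        · have hns := hsign i j h' hjQ
          rw [if_pos hev] at hns
          unfold Opp at hns
          simp only [if_true] at hns
          push_neg at hns
          linarith
        · rw [← h']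
          have := abs_le.mp (hgood i).1
          linarith [this.1]
      linarith [hcj.1]
    · intro hodd
      have hDj : D j ≤ δ/2 := by
        rcases lt_or_eq_of_le hPj with h' | h'
        · have hns := hsign i j h' hjQ
          rw [if_neg hodd] at hns
          unfold Opp at hns
          simp only [Bool.not_true, Bool.false_eq_true, if_false] at hns
          push_neg at hns
          linarith
        · rw [← h']
          have := abs_le.mp (hgood i).1
          linarith [this.2]
      linarith [hcj.2]
  -- the perturbation profile W
  set W : ℝ → ℝ :=
    fun x => ∑ i : Fin (n+1), (if Even (i:ℕ) then (1:ℝ)/2 else -(1/2)) * bump (A i) (B i) x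
    with hWdef
  have hsumAB : ∑ i : Fin (n+1), (B i - A i) ≤ 1 := by
    have h1 := sum_tel n A B (fun i => (hab i).le)
      (fun i => by
        have := hgapBA i
        have h2 : (0:ℝ) < 1/N := by positivity
        linarith)
    have h2 := (hAmem 0).1
    have h3 := (hBmem (Fin.last n)).2
    linarith
  have hWlip : ∀ x y : ℝ, |W x - W y| ≤ |x - y|/2 := by
    intro x y
    have he : W x - W y = ∑ i : Fin (n+1),
        (if Even (i:ℕ) then (1:ℝ)/2 else -(1/2)) * (bump (A i) (B i) x - bump (A i) (B i) y) := by
      rw [hWdef, ← Finset.sum_sub_distrib]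
      congr 1; ext i; ring
    rw [he]
    refine le_trans (Finset.abs_sum_le_sum_abs _ _) ?_
    have hbd : ∀ i : Fin (n+1),
        |(if Even (i:ℕ) then (1:ℝ)/2 else -(1/2)) * (bump (A i) (B i) x - bump (A i) (B i) y)|
          ≤ ((B i - A i) * |x - y|)/2 := by
      intro i
      rw [abs_mul]
      have h1 : |(if Even (i:ℕ) then (1:ℝ)/2 else -(1/2))| = 1/2 := by
        by_cases hev : Even (i:ℕ) <;> simp [hev]
      rw [h1]
      have h2 := bump_lip (A i) (B i) x y (hab i).le
      nlinarith [abs_nonneg (bump (A i) (B i) x - bump (A i) (B i) y)]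
    refine le_trans (Finset.sum_le_sum (fun i _ => hbd i)) ?_
    have heq2 : ∑ i : Fin (n+1), ((B i - A i) * |x - y|)/2
        = (∑ i : Fin (n+1), (B i - A i)) * |x-y| / 2 := by
      rw [Finset.sum_mul, Finset.sum_div]
    rw [heq2]
    have hxy := abs_nonneg (x - y)
    nlinarith
  have hWmono : StrictMono (fun x : ℝ => x + W x) := by
    intro x y hxy
    have h1 := hWlip x y
    have h2 := le_abs_self (W x - W y)
    have h3 : |x - y| = y - x := by rw [abs_sub_comm, abs_of_pos (by linarith)]
    rw [h3] at h1
    simp only []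
    linarith
  have hWcont : Continuous W := by
    apply continuous_finset_sum
    intro i _
    exact continuous_const.mul (bump_continuous _ _)
  have hWzero : ∀ (c : ℝ), (∀ k, c ≤ A k ∨ B k ≤ c) → W c = 0 := by
    intro c hc
    rw [hWdef]
    apply Finset.sum_eq_zero
    intro k _
    rcases hc k with h | h
    · rw [bump_eq_zero_left _ _ _ h, mul_zero]
    · rw [bump_eq_zero_right _ _ _ (hab k).le h, mul_zero]
  have hWA : ∀ i, W (A i) = 0 := by
    intro i; apply hWzero; intro k
    rcases lt_trichotomy k i with h | h | h
    · right; exact (hBA k i h).le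
    · left; rw [h]
    · left; exact le_trans (hab i).le (hBA i k h).le
  have hWB : ∀ i, W (B i) = 0 := by
    intro i; apply hWzero; intro k
    rcases lt_trichotomy k i with h | h | h
    · right; exact le_trans (hBA k i h).le (hab i).le
    · right; rw [h]
    · left; exact (hBA i k h).le
  have hW0 : W 0 = 0 := hWzero 0 (fun k => Or.inl (hAmem k).1)
  have hW1 : W 1 = 0 := hWzero 1 (fun k => Or.inr (hBmem k).2)
  have hWin : ∀ (i : Fin (n+1)) (x : ℝ), A i < x → x < B i →
      W x = (if Even (i:ℕ) then (1:ℝ)/2 else -(1/2)) * bump (A i) (B i) x := by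
    intro i x h1 h2
    rw [hWdef]
    apply Finset.sum_eq_single_of_mem i (Finset.mem_univ i)
    intro k _ hk
    rcases lt_or_gt_of_ne hk with h | h
    · rw [bump_eq_zero_right _ _ _ (hab k).le (le_trans (hBA k i h).le h1.le), mul_zero]
    · rw [bump_eq_zero_left _ _ _ (le_trans h2.le (hBA i k h).le), mul_zero]
  -- the perturbed map G
  set G : ℝ → ℝ := fun x => min (F x + δ) (max (F x - δ) (x + W x)) with hGdef
  have hGmono : StrictMonoOn G (Icc 0 1) := by
    intro x hx y hy hxy
    have hF := hFmono x y hx hy hxy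
    have hW : x + W x < y + W y := hWmono hxy
    exact min_lt_min (by linarith) (max_lt_max (by linarith) hW)
  have hGcont : Continuous G :=
    (hFcont.add continuous_const).min ((hFcont.sub continuous_const).max (continuous_id.add hWcont))
  have hG0 : G 0 = 0 := by
    simp only [hGdef, hF0, hW0, add_zero, zero_add, zero_sub]
    rw [max_eq_right (by linarith : -δ ≤ 0), min_eq_right (by linarith)]
  have hG1 : G 1 = 1 := by
    simp only [hGdef, hF1, hW1, add_zero]
    rw [max_eq_right (by linarith : 1 - δ ≤ 1), min_eq_right (by linarith)]
  obtain ⟨g, hg⟩ := exists_HI G hGmono hGcont.continuousOn hG0 hG1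
  have hclamp : ∀ x : ℝ, F x - δ ≤ G x ∧ G x ≤ F x + δ := by
    intro x
    constructor
    · exact le_min (by linarith) (le_max_left _ _)
    · exact min_le_left _ _
  have hfixnode : ∀ (x : ℝ), W x = 0 → |F x - x| < δ → G x = x := by
    intro x hW habs
    have h := abs_lt.mp habs
    simp only [hGdef]
    rw [hW, add_zero]
    rw [max_eq_right (by linarith), min_eq_right (by linarith)]
  set ai : Fin (n+1) → unitInterval := fun i => ⟨A i, hAmem i⟩ with haidef
  set bi : Fin (n+1) → unitInterval := fun i => ⟨B i, hBmem i⟩ with hbidef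
  have hgA : ∀ i, g (ai i) = ai i := by
    intro i
    apply Subtype.ext
    rw [hg]
    exact hfixnode _ (hWA i) (lt_of_le_of_lt (hDA i) (by linarith))
  have hgB : ∀ i, g (bi i) = bi i := by
    intro i
    apply Subtype.ext
    rw [hg]
    exact hfixnode _ (hWB i) (lt_of_le_of_lt (hDB i) (by linarith))
  have hgR : ∀ i : Fin (n+1), Even (i:ℕ) → ∀ x : unitInterval, ai i < x → x < bi i → x < g x := by
    intro i hev x h1 h2
    have h1' : A i < (x:ℝ) := h1
    have h2' : (x:ℝ) < B i := h2
    have hWx : W x = (1/2) * bump (A i) (B i) x := by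
      rw [hWin i x h1' h2', if_pos hev]
    have hbp : 0 < bump (A i) (B i) x := bump_pos _ _ _ ⟨h1', h2'⟩
    have hlow := (hd_in i x h1' h2').1 hev
    rw [← Subtype.coe_lt_coe, hg]
    simp only [hGdef]
    apply lt_min
    · linarith
    · exact lt_max_iff.mpr (Or.inr (by linarith))
  have hgL : ∀ i : Fin (n+1), ¬ Even (i:ℕ) → ∀ x : unitInterval, ai i < x → x < bi i → g x < x := by
    intro i hodd x h1 h2
    have h1' : A i < (x:ℝ) := h1
    have h2' : (x:ℝ) < B i := h2
    have hWx : W x = -(1/2) * bump (A i) (B i) x := by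
      rw [hWin i x h1' h2', if_neg hodd]
    have hbp : 0 < bump (A i) (B i) x := bump_pos _ _ _ ⟨h1', h2'⟩
    have hhigh := (hd_in i x h1' h2').2 hodd
    rw [← Subtype.coe_lt_coe, hg]
    simp only [hGdef]
    refine lt_of_le_of_lt (min_le_right _ _) (max_lt (by linarith) (by linarith))
  refine ⟨g, ⟨n, ai, bi, ?_, ?_, ?_, ?_, ?_, ?_, ?_, ?_, ?_⟩, ?_⟩
  · rw [← Subtype.coe_lt_coe]
    show (0:ℝ) < A 0
    rw [hA0]; positivity
  · intro i
    rw [← Subtype.coe_lt_coe]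
    exact hab i
  · intro i
    rw [← Subtype.coe_lt_coe]
    show B i.castSucc < A i.succ
    have := hgapBA i
    have h2 : (0:ℝ) < 1/N := by positivity
    linarith
  · rw [← Subtype.coe_lt_coe]
    show B (Fin.last n) < 1
    rw [hBlast]
    rw [div_lt_one hNpos]
    linarith
  · intro i hev
    refine ⟨by rw [← Subtype.coe_lt_coe]; exact hab i, hgA i, hgB i, ?_, ?_⟩
    · intro x hx
      exact (hgR i hev x hx.1 hx.2).ne'
    · exact tendsto_iterate_right g (ai i) (bi i) (hgB i) (fun x hx => hgR i hev x hx.1 hx.2)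
  · intro i hodd
    refine ⟨by rw [← Subtype.coe_lt_coe]; exact hab i, hgA i, hgB i, ?_, ?_⟩
    · intro x hx
      exact (hgL i hodd x hx.1 hx.2).ne
    · exact tendsto_iterate_left g (ai i) (bi i) (hgA i) (fun x hx => hgL i hodd x hx.1 hx.2)
  · show A 0 < ε
    rw [hA0]; exact hinvε
  · show 1 - B (Fin.last n) < ε
    rw [hBlast]
    have : 1 - ((N:ℝ) - 1)/N = 1/N := by field_simp; ring
    rw [this]; exact hinvε
  · intro i
    show A i.succ - B i.castSucc < ε
    rw [hgapBA i]; exact hinvε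
  · -- C⁰ distance
    have hdist1 : ∀ x : unitInterval, dist (f x) (g x) ≤ δ := by
      intro x
      rw [Subtype.dist_eq, Real.dist_eq, ← hFval x, hg]
      have h := hclamp (x:ℝ)
      rw [abs_le]
      constructor <;> [linarith [h.2]; linarith [h.1]]
    have hdist2 : ∀ x : unitInterval, dist (f.symm x) (g.symm x) ≤ r/2 := by
      intro x
      set u := g.symm x with hudef
      have hgu : g u = x := g.apply_symm_apply x
      have h1 : dist x (f u) < δ₂ := by
        rw [← hgu, dist_comm]
        exact lt_of_le_of_lt (hdist1 u) hδ2
      have h2 := hs h1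
      rw [OrderIso.symm_apply_apply] at h2
      exact h2.le
    have hfin : dC0 f g ≤ r/2 := by
      apply Real.iSup_le _ (by linarith)
      intro x
      exact max_le (le_trans (hdist1 x) (by linarith)) (hdist2 x)
    linarith
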